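/- Let K be an algebraically closed valued field, let C ≤ A be valued subfields of K which are algebraically closed as fields, let a₁,…,a_n ∈ K, and suppose that A is the algebraic closure of C(a₁,…,a_n) inside K and that Γ_C = Γ_A. Then there exist elements e₁,…,e_m of the subring C[a₁,…,a_n] with |e_i| ≤ 1 for each i, such that e₁,…,e_m are algebraically independent over C and the residues res(e₁),…,res(e_m) form a transcendence basis of k(A) over k(C). -/

import Mathlib

universe u w

set_option maxHeartbeats 1000000

open MvPolynomial Finset

open MvPolynomial Finset

namespace Stmt12

variable {K : Type u} {Γ : Type w} [Field K] [LinearOrderedCommGroupWithZero Γ]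

set_option maxHeartbeats 1000000 in
lemma bound_card {K : Type u} [Field K] (C : Subfield K) {n m : ℕ} (a : Fin n → K) (e : Fin m → K)
    (he : ∀ i, e i ∈ Subring.closure ((C : Set K) ∪ Set.range a))
    (hind : ∀ p : MvPolynomial (Fin m) K, (∀ mon, p.coeff mon ∈ C) →
      MvPolynomial.eval e p = 0 → p = 0) : m ≤ n := by
  classical
  -- filtration by "monomials in `a` with exponents ≤ d"
  set W : ℕ → Submodule ↥C K := fun d =>
    Submodule.span ↥C (Set.range fun β : Fin n → Fin (d+1) => ∏ i, a i ^ (β i : ℕ)) with hW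
  have W_mono : ∀ {d d' : ℕ}, d ≤ d' → W d ≤ W d' := by
    intro d d' hdd
    apply Submodule.span_mono
    rintro _ ⟨β, rfl⟩
    exact ⟨fun i => Fin.castLE (by omega) (β i), rfl⟩
  have one_mem_W : ∀ d, (1 : K) ∈ W d := by
    intro d
    apply Submodule.subset_span
    exact ⟨fun _ => 0, by simp⟩
  have mul_W : ∀ {d d' : ℕ} {x y : K}, x ∈ W d → y ∈ W d' → x * y ∈ W (d + d') := by
    intro d d' x y hx hy
    have hle : W d * W d' ≤ W (d + d') := by
      rw [hW]
      rw [Submodule.span_mul_span]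
      apply Submodule.span_le.2
      rintro _ ⟨_, ⟨β, rfl⟩, _, ⟨γ, rfl⟩, rfl⟩
      apply Submodule.subset_span
      refine ⟨fun i => ⟨(β i : ℕ) + (γ i : ℕ), by omega⟩, ?_⟩
      simp [pow_add, Finset.prod_mul_distrib]
    exact hle (Submodule.mul_mem_mul hx hy)
  have C_mem_W : ∀ (d : ℕ) (c : K), c ∈ C → c ∈ W d := by
    intro d c hc
    have := (W d).smul_mem (⟨c, hc⟩ : ↥C) (one_mem_W d)
    simpa [Subfield.smul_def] using this
  have a_mem_W : ∀ i, a i ∈ W 1 := by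
    intro i
    apply Submodule.subset_span
    refine ⟨fun j => if j = i then 1 else 0, ?_⟩
    dsimp only
    rw [Finset.prod_eq_single i (fun j _ hj => by simp [hj]) (by simp)]
    simp
  have hcl : ∀ x ∈ Subring.closure ((C : Set K) ∪ Set.range a), ∃ d, x ∈ W d := by
    intro x hx
    induction hx using Subring.closure_induction with
    | mem x hx =>
      rcases hx with hx | ⟨i, rfl⟩
      · exact ⟨0, C_mem_W 0 x hx⟩
      · exact ⟨1, a_mem_W i⟩
    | zero => exact ⟨0, (W 0).zero_mem⟩
    | one => exact ⟨0, one_mem_W 0⟩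
    | add x y _ _ hx hy =>
      obtain ⟨d₁, h₁⟩ := hx; obtain ⟨d₂, h₂⟩ := hy
      exact ⟨max d₁ d₂, (W _).add_mem (W_mono (le_max_left _ _) h₁) (W_mono (le_max_right _ _) h₂)⟩
    | neg x _ hx => obtain ⟨d, h⟩ := hx; exact ⟨d, (W d).neg_mem h⟩
    | mul x y _ _ hx hy =>
      obtain ⟨d₁, h₁⟩ := hx; obtain ⟨d₂, h₂⟩ := hy
      exact ⟨d₁ + d₂, mul_W h₁ h₂⟩
  choose ds hds using fun i => hcl (e i) (he i)
  set D := Finset.univ.sup ds with hD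
  have heD : ∀ i, e i ∈ W D := fun i => W_mono (Finset.le_sup (Finset.mem_univ i)) (hds i)
  have pow_W : ∀ {x : K} {d : ℕ} (k : ℕ), x ∈ W d → x ^ k ∈ W (k * d) := by
    intro x d k hx
    induction k with
    | zero => simpa using one_mem_W 0
    | succ k ih =>
      have := mul_W ih hx
      rw [pow_succ]
      convert this using 2
      ring
  have prod_W : ∀ (c : ℕ) (f : Fin m → K), (∀ i, f i ∈ W c) →
      (∏ i, f i) ∈ W (m * c) := by
    intro c f hf
    have : ∀ s : Finset (Fin m), (∏ i ∈ s, f i) ∈ W (s.card * c) := by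
      intro s
      induction s using Finset.induction with
      | empty => simpa using one_mem_W 0
      | @insert x s hx ih =>
        rw [Finset.prod_insert hx, Finset.card_insert_of_notMem hx]
        have := mul_W (hf x) ih
        convert this using 2
        ring
    simpa using this Finset.univ
  -- linear independence of monomials in `e`
  have hinj : Function.Injective (MvPolynomial.aeval (R := ↥C) e) := by
    rw [injective_iff_map_eq_zero]
    intro p hp
    have hP : MvPolynomial.map (algebraMap ↥C K) p = 0 := by
      apply hind
      · intro mon
        rw [MvPolynomial.coeff_map]
        exact (p.coeff mon).2
      · rw [← MvPolynomial.eval₂_eq_eval_map, ← MvPolynomial.aeval_def]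
        exact hp
    exact MvPolynomial.map_injective _ (Subtype.val_injective) (by simpa using hP)
  have li0 : LinearIndependent ↥C
      (fun mon : (Fin m →₀ ℕ) => MvPolynomial.aeval (R := ↥C) e
        (MvPolynomial.monomial mon (1 : ↥C))) := by
    have := (MvPolynomial.basisMonomials (Fin m) ↥C).linearIndependent.map'
      (MvPolynomial.aeval (R := ↥C) e).toLinearMap
      (LinearMap.ker_eq_bot.2 hinj)
    simpa [Function.comp_def] using this
  -- the key inequality
  have key : ∀ t : ℕ, t ^ m ≤ (m * (t * D) + 1) ^ n := by
    intro t
    set N := m * (t * D) with hN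
    set ι : (Fin m → Fin t) → (Fin m →₀ ℕ) :=
      fun β => Finsupp.equivFunOnFinite.symm (fun i => (β i : ℕ)) with hι
    have hιinj : Function.Injective ι := by
      intro β β' h
      have := Finsupp.equivFunOnFinite.symm.injective h
      funext i
      exact Fin.val_injective (congrFun this i)
    have li1 := li0.comp ι hιinj
    have hmem : ∀ β : Fin m → Fin t,
        MvPolynomial.aeval (R := ↥C) e (MvPolynomial.monomial (ι β) (1 : ↥C)) ∈ W N := by
      intro β
      rw [MvPolynomial.aeval_monomial]
      have h1 : (algebraMap ↥C K) 1 = 1 := map_one _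
      rw [h1, one_mul]
      have : (ι β).prod (fun i k => e i ^ k) = ∏ i, e i ^ (β i : ℕ) := by
        rw [Finsupp.prod_fintype _ _ (fun i => pow_zero (e i))]
        rfl
      rw [this]
      apply prod_W
      intro i
      have : e i ^ (β i : ℕ) ∈ W ((β i : ℕ) * D) := pow_W _ (heD i)
      exact W_mono (by have := (β i).2; exact Nat.mul_le_mul_right D (by omega)) this
    haveI : FiniteDimensional ↥C ↥(W N) := by
      rw [hW]
      exact FiniteDimensional.span_of_finite _ (Set.finite_range _)
    set F : (Fin m → Fin t) → ↥(W N) := fun β =>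
      ⟨MvPolynomial.aeval (R := ↥C) e (MvPolynomial.monomial (ι β) (1 : ↥C)), hmem β⟩ with hF
    have liF : LinearIndependent ↥C F := by
      apply LinearIndependent.of_comp (W N).subtype
      exact li1
    have card1 : Fintype.card (Fin m → Fin t) ≤ Module.finrank ↥C ↥(W N) :=
      liF.fintype_card_le_finrank
    have card2 : Module.finrank ↥C ↥(W N) ≤ Fintype.card (Fin n → Fin (N+1)) := by
      have h := finrank_range_le_card (R := ↥C)
        (fun β : Fin n → Fin (N+1) => ∏ i, a i ^ (β i : ℕ))
      unfold Set.finrank at h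
      rw [hW]
      exact h
    have card3 : Fintype.card (Fin n → Fin (N+1)) = (N + 1) ^ n := by simp [Fintype.card_fun]
    calc t ^ m = Fintype.card (Fin m → Fin t) := by simp [Fintype.card_fun]
      _ ≤ (N + 1) ^ n := le_trans card1 (le_trans card2 (le_of_eq card3))
  -- arithmetic
  by_contra hmn
  push_neg at hmn
  set B := m * D + 1 with hB
  set t := B ^ n + 1 with ht
  have ht1 : 1 ≤ t := by rw [ht]; exact Nat.le_add_left 1 _
  have h1 : t ^ m ≤ (m * (t * D) + 1) ^ n := key t
  have h2 : m * (t * D) + 1 ≤ t * B := by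
    rw [hB]; nlinarith
  have h3 : t ^ m ≤ (t * B) ^ n := le_trans h1 (Nat.pow_le_pow_left h2 n)
  have h4 : t ^ (n + 1) ≤ t ^ m := Nat.pow_le_pow_right ht1 (by omega)
  have h5 : t ^ n * t ≤ t ^ n * B ^ n := by
    calc t ^ n * t = t ^ (n+1) := by ring
      _ ≤ (t * B) ^ n := le_trans h4 h3
      _ = t ^ n * B ^ n := by rw [mul_pow]
  have h6 : t ≤ B ^ n := Nat.le_of_mul_le_mul_left h5 (Nat.pow_pos (by omega))
  omega



/-- Coefficients lie in `C` and are `v`-integral. -/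
def GoodCoeffs (v : Valuation K Γ) (C : Subfield K) {m : ℕ} (q : MvPolynomial (Fin m) K) : Prop :=
  ∀ mon, q.coeff mon ∈ C ∧ v (q.coeff mon) ≤ 1

/-- Residue-level algebraic independence, stated with valuations. -/
def Indep (v : Valuation K Γ) (C : Subfield K) {m : ℕ} (e : Fin m → K) : Prop :=
  ∀ p : MvPolynomial (Fin m) K, GoodCoeffs v C p →
    v (MvPolynomial.eval e p) < 1 → ∀ mon, v (p.coeff mon) < 1

/-- A good family. -/
def Fam (v : Valuation K Γ) (C : Subfield K) {n m : ℕ} (a : Fin n → K) (e : Fin m → K) : Prop :=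
  (∀ i, e i ∈ Subring.closure ((C : Set K) ∪ Set.range a) ∧ v (e i) ≤ 1) ∧ Indep v C e

/-- The conclusion data for one element `x`. -/
def Data (v : Valuation K Γ) (C : Subfield K) {m : ℕ} (e : Fin m → K) (x : K) : Prop :=
  ∃ (d : ℕ) (q : Fin (d + 1) → MvPolynomial (Fin m) K),
    (∀ j mon, (q j).coeff mon ∈ C ∧ v ((q j).coeff mon) ≤ 1) ∧
    (∃ j, v (MvPolynomial.eval e (q j)) = 1) ∧
    v (∑ j : Fin (d + 1), MvPolynomial.eval e (q j) * x ^ (j : ℕ)) < 1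

lemma eval_le_one (v : Valuation K Γ) {m : ℕ} {e : Fin m → K} (he : ∀ i, v (e i) ≤ 1)
    {q : MvPolynomial (Fin m) K} (hq : ∀ mon, v (q.coeff mon) ≤ 1) :
    v (MvPolynomial.eval e q) ≤ 1 := by
  have : MvPolynomial.eval e q ∈ v.valuationSubring :=
    MvPolynomial.eval_mem (fun i _ => hq i) he
  exact this

lemma indep_empty (v : Valuation K Γ) (C : Subfield K) (e : Fin 0 → K) : Indep v C e := by
  intro p hp hlt mon
  have hmon : mon = 0 := Subsingleton.elim _ _
  have hp0 : p = MvPolynomial.C (p.coeff 0) := (MvPolynomial.eq_C_of_isEmpty p)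
  have : MvPolynomial.eval e p = p.coeff 0 := by rw [hp0]; simp
  rw [hmon, ← this]
  exact hlt

lemma isUnit_iff_val_one (v : Valuation K Γ) (y : ↥v.valuationSubring) :
    IsUnit y ↔ v ↑y = 1 := by
  constructor
  · intro h
    obtain ⟨z, hz⟩ := h.exists_right_inv
    have hz' : (y : K) * (z : K) = 1 := by exact_mod_cast congrArg Subtype.val hz
    have hval : v ↑y * v ↑z = 1 := by rw [← v.map_mul, hz', v.map_one]
    refine le_antisymm y.2 ?_
    calc (1 : Γ) = v ↑y * v ↑z := hval.symm
      _ ≤ v ↑y * 1 := mul_le_mul_right z.2 _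
      _ = v ↑y := mul_one _
  · intro h
    have hy0 : (y : K) ≠ 0 := by
      intro h0
      rw [h0, v.map_zero] at h
      exact zero_ne_one h
    refine IsUnit.of_mul_eq_one (a := y) ⟨(y : K)⁻¹, ?_⟩ ?_
    · show v (y : K)⁻¹ ≤ 1
      rw [map_inv₀, h, inv_one]
    · exact Subtype.ext (mul_inv_cancel₀ hy0)

lemma residue_eq_zero_iff (v : Valuation K Γ) (y : ↥v.valuationSubring) :
    IsLocalRing.residue ↥v.valuationSubring y = 0 ↔ v ↑y < 1 := by
  rw [IsLocalRing.residue_eq_zero_iff, IsLocalRing.mem_maximalIdeal, mem_nonunits_iff,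
    isUnit_iff_val_one]
  rcases lt_or_eq_of_le y.2 with h | h
  · simp [h, ne_of_lt h]
  · simp [h, not_lt_of_ge (le_of_eq h.symm)]

lemma residue_ne_zero_iff (v : Valuation K Γ) (y : ↥v.valuationSubring) :
    IsLocalRing.residue ↥v.valuationSubring y ≠ 0 ↔ v ↑y = 1 := by
  rw [Ne, residue_eq_zero_iff, not_lt]
  exact ⟨fun h => le_antisymm y.2 h, fun h => le_of_eq h.symm⟩

/-- generators of the residue field of `C` -/
def kCset (v : Valuation K Γ) (C : Subfield K) : Set (IsLocalRing.ResidueField ↥v.valuationSubring) :=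
  {d | ∃ y : ↥v.valuationSubring, (y : K) ∈ C ∧ IsLocalRing.residue _ y = d}

/-- the subfield `k(C)(res e)` of the residue field of `K` -/
noncomputable def resL (v : Valuation K Γ) (C : Subfield K) {m : ℕ} (eO : Fin m → ↥v.valuationSubring) :
    Subfield (IsLocalRing.ResidueField ↥v.valuationSubring) :=
  Subfield.closure (kCset v C ∪ Set.range (fun i => IsLocalRing.residue _ (eO i)))

/-- clearing denominators -/
lemma clear_denoms {F : Type*} [Field F] (S : Set F) {N : ℕ} (c : Fin N → F)
    (hc : ∀ j, c j ∈ Subfield.closure S) :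
    ∃ Z : F, Z ≠ 0 ∧ ∀ j, c j * Z ∈ Subring.closure S := by
  classical
  have h : ∀ j, ∃ y z : F, y ∈ Subring.closure S ∧ z ∈ Subring.closure S ∧ z ≠ 0 ∧
      c j = y / z := by
    intro j
    rcases eq_or_ne (c j) 0 with h0 | h0
    · exact ⟨0, 1, Subring.zero_mem _, Subring.one_mem _, one_ne_zero, by rw [h0]; simp⟩
    · obtain ⟨y, hy, z, hz, hyz⟩ := Subfield.mem_closure_iff.1 (hc j)
      refine ⟨y, z, hy, hz, ?_, hyz.symm⟩
      intro hz0
      rw [hz0, div_zero] at hyz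
      exact h0 hyz.symm
  choose y z hy hz hz0 hc' using h
  refine ⟨∏ j, z j, Finset.prod_ne_zero_iff.2 (fun j _ => hz0 j), ?_⟩
  intro j
  have key : c j * ∏ k, z k = y j * ∏ k ∈ Finset.univ.erase j, z k := by
    rw [hc' j, ← Finset.mul_prod_erase Finset.univ z (Finset.mem_univ j)]
    rw [div_mul_eq_mul_div, mul_left_comm, mul_div_cancel_left₀ _ (hz0 j)]
  rw [key]
  exact Subring.mul_mem _ (hy j) (Subring.prod_mem _ (fun k _ => hz k))

end Stmt12

namespace Stmt12

variable {K : Type u} {Γ : Type w} [Field K] [LinearOrderedCommGroupWithZero Γ]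

lemma sum_C_mul_X_pow_coeff {R : Type*} [CommRing R] {N : ℕ} (c : Fin (N+1) → R) (k : Fin (N+1)) :
    (∑ j : Fin (N+1), Polynomial.C (c j) * Polynomial.X ^ (j : ℕ)).coeff (k : ℕ) = c k := by
  classical
  rw [Polynomial.finset_sum_coeff]
  simp only [Polynomial.coeff_C_mul, Polynomial.coeff_X_pow, mul_ite, mul_one, mul_zero,
    Fin.val_eq_val]
  rw [Finset.sum_ite_eq Finset.univ k c]
  simp

lemma sum_C_mul_X_pow_aeval {R S : Type*} [CommRing R] [CommRing S] [Algebra R S] {N : ℕ}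
    (c : Fin (N+1) → R) (ξ : S) :
    Polynomial.aeval ξ (∑ j : Fin (N+1), Polynomial.C (c j) * Polynomial.X ^ (j : ℕ)) =
      ∑ j : Fin (N+1), algebraMap R S (c j) * ξ ^ (j : ℕ) := by
  rw [map_sum]
  congr 1
  funext j
  rw [map_mul, map_pow, Polynomial.aeval_C, Polynomial.aeval_X]

lemma resEval_mem (v : Valuation K Γ) (C : Subfield K) {m : ℕ}
    (eO : Fin m → ↥v.valuationSubring) {q : MvPolynomial (Fin m) K} (hq : GoodCoeffs v C q)
    (hmem : MvPolynomial.eval (fun i => ↑(eO i)) q ∈ v.valuationSubring) :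
    IsLocalRing.residue ↥v.valuationSubring ⟨_, hmem⟩ ∈
      Subring.closure (kCset v C ∪
        Set.range (fun i => IsLocalRing.residue ↥v.valuationSubring (eO i))) := by
  classical
  set cO : (Fin m →₀ ℕ) → ↥v.valuationSubring := fun mon => ⟨q.coeff mon, (hq mon).2⟩ with hcO
  set sO : ↥v.valuationSubring := ∑ mon ∈ q.support, cO mon * ∏ i, (eO i) ^ (mon i) with hsO
  have hs : (⟨_, hmem⟩ : ↥v.valuationSubring) = sO := by
    apply Subtype.ext
    show MvPolynomial.eval (fun i => ↑(eO i)) q = ↑sO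
    rw [MvPolynomial.eval_eq', hsO]
    push_cast
    rfl
  rw [hs, hsO, map_sum]
  apply Subring.sum_mem
  intro mon _
  rw [map_mul, map_prod]
  apply Subring.mul_mem
  · exact Subring.subset_closure (Or.inl ⟨cO mon, (hq mon).1, rfl⟩)
  · apply Subring.prod_mem
    intro i _
    rw [map_pow]
    have hgen : IsLocalRing.residue ↥v.valuationSubring (eO i) ∈ (kCset v C ∪
        Set.range (fun i => IsLocalRing.residue ↥v.valuationSubring (eO i))) := Or.inr ⟨i, rfl⟩
    exact pow_mem (Subring.subset_closure hgen) _

lemma lift_of_mem (v : Valuation K Γ) (C : Subfield K) {m : ℕ}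
    (eO : Fin m → ↥v.valuationSubring) {dd : IsLocalRing.ResidueField ↥v.valuationSubring}
    (hdd : dd ∈ Subring.closure (kCset v C ∪
      Set.range (fun i => IsLocalRing.residue ↥v.valuationSubring (eO i)))) :
    ∃ q : MvPolynomial (Fin m) K, GoodCoeffs v C q ∧
      ∃ hmem : MvPolynomial.eval (fun i => ↑(eO i)) q ∈ v.valuationSubring,
        IsLocalRing.residue ↥v.valuationSubring ⟨_, hmem⟩ = dd := by
  classical
  induction hdd using Subring.closure_induction with
  | mem x hx =>
    rcases hx with ⟨y, hyC, rfl⟩ | ⟨i, rfl⟩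
    · have hmem : MvPolynomial.eval (fun i => ↑(eO i)) (MvPolynomial.C (↑y : K)) ∈
          v.valuationSubring := by rw [MvPolynomial.eval_C]; exact y.2
      refine ⟨MvPolynomial.C (↑y : K), ?_, hmem, ?_⟩
      · intro mon
        rw [MvPolynomial.coeff_C]
        split
        · exact ⟨hyC, y.2⟩
        · exact ⟨C.zero_mem, by rw [v.map_zero]; exact zero_le_one⟩
      · have h1 : (⟨_, hmem⟩ : ↥v.valuationSubring) = y := Subtype.ext (MvPolynomial.eval_C _)
        rw [h1]
    · have hmem : MvPolynomial.eval (fun i => ↑(eO i)) (MvPolynomial.X i) ∈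
          v.valuationSubring := by rw [MvPolynomial.eval_X]; exact (eO i).2
      refine ⟨MvPolynomial.X i, ?_, hmem, ?_⟩
      · intro mon
        rw [MvPolynomial.coeff_X']
        split
        · exact ⟨C.one_mem, by rw [v.map_one]⟩
        · exact ⟨C.zero_mem, by rw [v.map_zero]; exact zero_le_one⟩
      · have h1 : (⟨_, hmem⟩ : ↥v.valuationSubring) = eO i := Subtype.ext (MvPolynomial.eval_X _)
        rw [h1]
  | zero =>
    have hmem : MvPolynomial.eval (fun i => ↑(eO i)) (0 : MvPolynomial (Fin m) K) ∈
        v.valuationSubring := by rw [map_zero]; exact zero_mem _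
    refine ⟨0, ?_, hmem, ?_⟩
    · intro mon
      rw [MvPolynomial.coeff_zero]
      exact ⟨C.zero_mem, by rw [v.map_zero]; exact zero_le_one⟩
    · have h1 : (⟨_, hmem⟩ : ↥v.valuationSubring) = 0 := Subtype.ext (map_zero _)
      rw [h1, map_zero]
  | one =>
    have hmem : MvPolynomial.eval (fun i => ↑(eO i)) (1 : MvPolynomial (Fin m) K) ∈
        v.valuationSubring := by rw [map_one]; exact one_mem _
    refine ⟨1, ?_, hmem, ?_⟩
    · intro mon
      rw [MvPolynomial.coeff_one]
      split
      · exact ⟨C.one_mem, by rw [v.map_one]⟩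
      · exact ⟨C.zero_mem, by rw [v.map_zero]; exact zero_le_one⟩
    · have h1 : (⟨_, hmem⟩ : ↥v.valuationSubring) = 1 := Subtype.ext (map_one _)
      rw [h1, map_one]
  | add x y _ _ hx hy =>
    obtain ⟨q₁, hq₁, hm₁, hr₁⟩ := hx
    obtain ⟨q₂, hq₂, hm₂, hr₂⟩ := hy
    have hmem : MvPolynomial.eval (fun i => ↑(eO i)) (q₁ + q₂) ∈ v.valuationSubring := by
      rw [map_add]; exact add_mem hm₁ hm₂
    refine ⟨q₁ + q₂, ?_, hmem, ?_⟩
    · intro mon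
      rw [MvPolynomial.coeff_add]
      exact ⟨C.add_mem (hq₁ mon).1 (hq₂ mon).1,
        le_trans (v.map_add _ _) (max_le (hq₁ mon).2 (hq₂ mon).2)⟩
    · have h1 : (⟨_, hmem⟩ : ↥v.valuationSubring) = ⟨_, hm₁⟩ + ⟨_, hm₂⟩ := Subtype.ext (map_add _ _ _)
      rw [h1, map_add, hr₁, hr₂]
  | neg x _ hx =>
    obtain ⟨q₁, hq₁, hm₁, hr₁⟩ := hx
    have hmem : MvPolynomial.eval (fun i => ↑(eO i)) (-q₁) ∈ v.valuationSubring := by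
      rw [map_neg]; exact neg_mem hm₁
    refine ⟨-q₁, ?_, hmem, ?_⟩
    · intro mon
      rw [MvPolynomial.coeff_neg]
      exact ⟨C.neg_mem (hq₁ mon).1, by rw [v.map_neg]; exact (hq₁ mon).2⟩
    · have h1 : (⟨_, hmem⟩ : ↥v.valuationSubring) = -⟨_, hm₁⟩ := Subtype.ext (map_neg _ _)
      rw [h1, map_neg, hr₁]
  | mul x y _ _ hx hy =>
    obtain ⟨q₁, hq₁, hm₁, hr₁⟩ := hx
    obtain ⟨q₂, hq₂, hm₂, hr₂⟩ := hy
    have hmem : MvPolynomial.eval (fun i => ↑(eO i)) (q₁ * q₂) ∈ v.valuationSubring := by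
      rw [map_mul]; exact mul_mem hm₁ hm₂
    refine ⟨q₁ * q₂, ?_, hmem, ?_⟩
    · intro mon
      have hmm : (q₁ * q₂).coeff mon ∈ C.toSubring ⊓ v.valuationSubring.toSubring := by
        rw [MvPolynomial.coeff_mul]
        apply Subring.sum_mem
        intro c _
        exact Subring.mul_mem _ ⟨(hq₁ c.1).1, (hq₁ c.1).2⟩ ⟨(hq₂ c.2).1, (hq₂ c.2).2⟩
      exact ⟨hmm.1, hmm.2⟩
    · have h1 : (⟨_, hmem⟩ : ↥v.valuationSubring) = ⟨_, hm₁⟩ * ⟨_, hm₂⟩ := Subtype.ext (map_mul _ _ _)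
      rw [h1, map_mul, hr₁, hr₂]

end Stmt12

namespace Stmt12

variable {K : Type u} {Γ : Type w} [Field K] [LinearOrderedCommGroupWithZero Γ]

lemma D_le_L (v : Valuation K Γ) (C : Subfield K) {m : ℕ} (eO : Fin m → ↥v.valuationSubring) :
    Subring.closure (kCset v C ∪
        Set.range (fun i => IsLocalRing.residue ↥v.valuationSubring (eO i))) ≤
      (resL v C eO).toSubring :=
  Subring.closure_le.2 (fun x hx => Subfield.subset_closure hx)

lemma data_to_alg (v : Valuation K Γ) (C : Subfield K) {m : ℕ}
    (eO : Fin m → ↥v.valuationSubring) (xO : ↥v.valuationSubring)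
    (hdata : Data v C (fun i => ↑(eO i)) ↑xO) :
    IsAlgebraic ↥(resL v C eO) (IsLocalRing.residue ↥v.valuationSubring xO) := by
  classical
  obtain ⟨d, q, hgood, ⟨j₁, hj₁⟩, hsum⟩ := hdata
  have hmem : ∀ j, MvPolynomial.eval (fun i => ↑(eO i)) (q j) ∈ v.valuationSubring :=
    fun j => eval_le_one v (fun i => (eO i).2) (fun mon => (hgood j mon).2)
  set ρ := IsLocalRing.residue ↥v.valuationSubring with hρ
  set cL : Fin (d+1) → ↥(resL v C eO) := fun j =>
    ⟨ρ ⟨_, hmem j⟩, D_le_L v C eO (resEval_mem v C eO (hgood j) (hmem j))⟩ with hcL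
  set P : Polynomial ↥(resL v C eO) :=
    ∑ j : Fin (d+1), Polynomial.C (cL j) * Polynomial.X ^ (j : ℕ) with hP
  have hP0 : P ≠ 0 := by
    intro h
    have hc : P.coeff (j₁ : ℕ) = cL j₁ := sum_C_mul_X_pow_coeff cL j₁
    rw [h, Polynomial.coeff_zero] at hc
    have : ρ ⟨_, hmem j₁⟩ ≠ 0 := (residue_ne_zero_iff v _).2 hj₁
    exact this (congrArg Subtype.val hc.symm)
  refine ⟨P, hP0, ?_⟩
  rw [hP, sum_C_mul_X_pow_aeval]
  have halg : ∀ j : Fin (d+1), algebraMap ↥(resL v C eO) _ (cL j) = ρ ⟨_, hmem j⟩ := fun j => rfl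
  -- the sum inside the valuation ring
  set SS : ↥v.valuationSubring := ∑ j : Fin (d+1), ⟨_, hmem j⟩ * xO ^ (j : ℕ) with hSS
  have hSSval : (SS : K) = ∑ j : Fin (d+1),
      MvPolynomial.eval (fun i => ↑(eO i)) (q j) * (xO : K) ^ (j : ℕ) := by
    rw [hSS]
    push_cast
    rfl
  have hSS0 : ρ SS = 0 := by
    rw [hρ, residue_eq_zero_iff, hSSval]
    exact hsum
  calc (∑ j : Fin (d+1), algebraMap ↥(resL v C eO) _ (cL j) *
        (IsLocalRing.residue ↥v.valuationSubring xO) ^ (j : ℕ))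
      = ρ SS := by
        rw [hSS, map_sum]
        refine (Finset.sum_congr rfl fun j _ => ?_).symm
        rw [map_mul, map_pow, halg j]
    _ = 0 := hSS0

lemma alg_to_data (v : Valuation K Γ) (C : Subfield K) {m : ℕ}
    (eO : Fin m → ↥v.valuationSubring) (xO : ↥v.valuationSubring)
    (halg : IsAlgebraic ↥(resL v C eO) (IsLocalRing.residue ↥v.valuationSubring xO)) :
    Data v C (fun i => ↑(eO i)) ↑xO := by
  classical
  obtain ⟨P, hP0, hPx⟩ := halg
  set ρ := IsLocalRing.residue ↥v.valuationSubring with hρ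
  set d := P.natDegree with hd
  set c : Fin (d+1) → IsLocalRing.ResidueField ↥v.valuationSubring :=
    fun j => ↑(P.coeff (j : ℕ)) with hc
  have hcmem : ∀ j, c j ∈ Subfield.closure (kCset v C ∪
      Set.range (fun i => ρ (eO i))) := fun j => (P.coeff (j : ℕ)).2
  obtain ⟨Z, hZ0, hZ⟩ := clear_denoms _ c hcmem
  have hlift := fun j => lift_of_mem v C eO (hZ j)
  choose q hq hqmem hqres using hlift
  refine ⟨d, q, fun j => hq j, ?_, ?_⟩
  · -- the leading coefficient witnesses valuation one
    refine ⟨⟨d, Nat.lt_succ_self d⟩, ?_⟩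
    have hcne : c ⟨d, Nat.lt_succ_self d⟩ ≠ 0 := by
      rw [hc]
      simp only [ne_eq, ZeroMemClass.coe_eq_zero]
      exact fun h => hP0 (Polynomial.leadingCoeff_eq_zero.1 h)
    have hne : ρ ⟨_, hqmem ⟨d, Nat.lt_succ_self d⟩⟩ ≠ 0 := by
      rw [hqres]
      exact mul_ne_zero hcne hZ0
    exact (residue_ne_zero_iff v _).1 hne
  · -- the sum has valuation < 1
    set SS : ↥v.valuationSubring := ∑ j : Fin (d+1), ⟨_, hqmem j⟩ * xO ^ (j : ℕ) with hSS
    have hSSval : (SS : K) = ∑ j : Fin (d+1),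
        MvPolynomial.eval (fun i => ↑(eO i)) (q j) * (xO : K) ^ (j : ℕ) := by
      rw [hSS]; push_cast; rfl
    have haev : (∑ j : Fin (d+1), c j * (ρ xO) ^ (j : ℕ)) = 0 := by
      have h1 := Polynomial.aeval_eq_sum_range (R := ↥(resL v C eO)) (ρ xO) (p := P)
      rw [hPx] at h1
      rw [← Fin.sum_univ_eq_sum_range (fun i => P.coeff i • (ρ xO) ^ i) (d+1)] at h1
      have hsmul : ∀ j : Fin (d+1), c j * (ρ xO) ^ (j : ℕ) =
          P.coeff (j : ℕ) • (ρ xO) ^ (j : ℕ) := fun j => by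
        rw [Algebra.smul_def]; rfl
      rw [Finset.sum_congr rfl (fun j _ => hsmul j)]
      exact h1.symm
    have hSS0 : ρ SS = 0 := by
      rw [hSS, map_sum]
      have : ∀ j : Fin (d+1), ρ (⟨_, hqmem j⟩ * xO ^ (j : ℕ)) = (c j * Z) * (ρ xO) ^ (j : ℕ) := by
        intro j
        rw [map_mul, map_pow, hqres j]
      rw [Finset.sum_congr rfl (fun j _ => this j)]
      have : ∑ j : Fin (d+1), (c j * Z) * (ρ xO) ^ (j : ℕ) =
          (∑ j : Fin (d+1), c j * (ρ xO) ^ (j : ℕ)) * Z := by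
        rw [Finset.sum_mul]
        exact Finset.sum_congr rfl fun j _ => by ring
      rw [this, haev, zero_mul]
    have := (residue_eq_zero_iff v SS).1 hSS0
    rw [hSSval] at this
    exact this

end Stmt12

namespace Stmt12

variable {K : Type u} {Γ : Type w} [Field K] [LinearOrderedCommGroupWithZero Γ]

lemma stepB (v : Valuation K Γ) {C A : Subfield K} (hCA : C ≤ A) {n m : ℕ} {a : Fin n → K}
    (hval : ∀ x ∈ A, x ≠ 0 → ∃ c ∈ C, c ≠ 0 ∧ v c = v x)
    {e : Fin m → K} (hfam : Fam v C a e) :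
    ∀ p : MvPolynomial (Fin m) K, (∀ mon, p.coeff mon ∈ C) →
      MvPolynomial.eval e p = 0 → p = 0 := by
  intro p hp hev
  by_contra hp0
  obtain ⟨mon₀, hmon₀sup, hmaxv⟩ := Finset.exists_max_image p.support
    (fun mon => v (p.coeff mon))
    (Finset.nonempty_iff_ne_empty.2 (fun h => hp0 (MvPolynomial.support_eq_empty.1 h)))
  have hcne : p.coeff mon₀ ≠ 0 := MvPolynomial.mem_support_iff.1 hmon₀sup
  obtain ⟨c₀, hc₀C, hc₀0, hc₀v⟩ := hval _ (hCA (hp mon₀)) hcne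
  have hvc₀ : v c₀ ≠ 0 := fun h => hc₀0 (v.zero_iff.1 h)
  set p' : MvPolynomial (Fin m) K := MvPolynomial.C c₀⁻¹ * p with hp'
  have hgood : GoodCoeffs v C p' := by
    intro mon
    rw [hp', MvPolynomial.coeff_C_mul]
    refine ⟨C.mul_mem (C.inv_mem hc₀C) (hp mon), ?_⟩
    rw [v.map_mul, map_inv₀]
    by_cases hmem : mon ∈ p.support
    · calc (v c₀)⁻¹ * v (p.coeff mon) ≤ (v c₀)⁻¹ * v (p.coeff mon₀) :=
          mul_le_mul_right (hmaxv mon hmem) _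
        _ = (v c₀)⁻¹ * v c₀ := by rw [hc₀v]
        _ = 1 := inv_mul_cancel₀ hvc₀
    · rw [MvPolynomial.notMem_support_iff.1 hmem, v.map_zero, mul_zero]
      exact zero_le_one
  have hev' : v (MvPolynomial.eval e p') < 1 := by
    rw [hp', map_mul, MvPolynomial.eval_C, hev, mul_zero, v.map_zero]
    exact zero_lt_one
  have := hfam.2 p' hgood hev' mon₀
  rw [hp', MvPolynomial.coeff_C_mul, v.map_mul, map_inv₀, ← hc₀v, inv_mul_cancel₀
    (fun h => hcne (v.zero_iff.1 (by rw [hc₀v] at h; exact h)))] at this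
  exact lt_irrefl _ this

lemma stepD (v : Valuation K Γ) (C : Subfield K) {n m : ℕ} {a : Fin n → K} {e : Fin m → K}
    (hfam : Fam v C a e) {g : K}
    (hg : g ∈ Subring.closure ((C : Set K) ∪ Set.range a)) (hg1 : v g ≤ 1)
    (hmax : ¬ Fam v C a (Fin.cons g e)) : Data v C e g := by
  classical
  have hfst : ∀ i : Fin (m+1), (Fin.cons g e : Fin (m+1) → K) i ∈
      Subring.closure ((C : Set K) ∪ Set.range a) ∧
      v ((Fin.cons g e : Fin (m+1) → K) i) ≤ 1 := by
    intro i
    induction i using Fin.cases with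
    | zero => simpa using ⟨hg, hg1⟩
    | succ j => simpa using hfam.1 j
  have hnind : ¬ Indep v C (Fin.cons g e) := fun h => hmax ⟨hfst, h⟩
  rw [Indep] at hnind
  push_neg at hnind
  obtain ⟨p, hpgood, hplt, mon₀, hmon₀⟩ := hnind
  set P := MvPolynomial.finSuccEquiv K m p with hP
  set d := P.natDegree with hd
  set q : Fin (d+1) → MvPolynomial (Fin m) K := fun j => P.coeff (j : ℕ) with hq
  have hqgood : ∀ j, GoodCoeffs v C (q j) := by
    intro j mon
    show MvPolynomial.coeff mon (P.coeff (j : ℕ)) ∈ C ∧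
      v (MvPolynomial.coeff mon (P.coeff (j : ℕ))) ≤ 1
    rw [hP, MvPolynomial.finSuccEquiv_coeff_coeff]
    exact hpgood _
  have hde : (Polynomial.map (MvPolynomial.eval e) P).natDegree < d + 1 :=
    lt_of_le_of_lt Polynomial.natDegree_map_le (Nat.lt_succ_self d)
  have hevalsum : MvPolynomial.eval (Fin.cons g e) p =
      ∑ j : Fin (d+1), MvPolynomial.eval e (q j) * g ^ (j : ℕ) := by
    rw [MvPolynomial.eval_eq_eval_mv_eval', Polynomial.eval_eq_sum_range' hde,
      ← Fin.sum_univ_eq_sum_range]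
    exact Finset.sum_congr rfl fun j _ => by rw [Polynomial.coeff_map]
  have hp1 : v (p.coeff mon₀) = 1 := le_antisymm (hpgood mon₀).2 hmon₀
  set j₀ := mon₀ 0 with hj₀
  have hcoeff : MvPolynomial.coeff (Finsupp.tail mon₀) (P.coeff j₀) = p.coeff mon₀ := by
    rw [hP, MvPolynomial.finSuccEquiv_coeff_coeff, Finsupp.cons_tail]
  have hqne : P.coeff j₀ ≠ 0 := by
    intro h
    rw [h, MvPolynomial.coeff_zero] at hcoeff
    rw [← hcoeff, v.map_zero] at hp1
    exact zero_ne_one hp1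
  have hj₀le : j₀ < d + 1 := Nat.lt_succ_of_le (Polynomial.le_natDegree_of_ne_zero hqne)
  have hnlt : ¬ v (MvPolynomial.eval e (q ⟨j₀, hj₀le⟩)) < 1 := by
    intro hlt
    have h2 := hfam.2 (q ⟨j₀, hj₀le⟩) (hqgood _) hlt (Finsupp.tail mon₀)
    have h3 : MvPolynomial.coeff (Finsupp.tail mon₀) (q ⟨j₀, hj₀le⟩) = p.coeff mon₀ := hcoeff
    rw [h3, hp1] at h2
    exact lt_irrefl _ h2
  have hle := eval_le_one v (fun i => (hfam.1 i).2) (fun mon => (hqgood ⟨j₀, hj₀le⟩ mon).2)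
  exact ⟨d, q, fun j => hqgood j, ⟨⟨j₀, hj₀le⟩, le_antisymm hle (not_lt.1 hnlt)⟩,
    by rw [← hevalsum]; exact hplt⟩

end Stmt12

namespace Stmt12

variable {K : Type u} {Γ : Type w} [Field K] [LinearOrderedCommGroupWithZero Γ]

set_option maxHeartbeats 1600000 in
set_option synthInstance.maxHeartbeats 400000 in
lemma stepE (v : Valuation K Γ) {C A : Subfield K} (hCA : C ≤ A) {n m : ℕ} {a : Fin n → K}
    (ha : ∀ i, a i ∈ A)
    (hAdef : ∀ x : K, x ∈ A ↔ ∃ p : Polynomial K, p ≠ 0 ∧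
      (∀ j, p.coeff j ∈ Subfield.closure ((C : Set K) ∪ Set.range a)) ∧ p.eval x = 0)
    (hval : ∀ x ∈ A, x ≠ 0 → ∃ c ∈ C, c ≠ 0 ∧ v c = v x)
    {e : Fin m → K} (he : ∀ i, v (e i) ≤ 1)
    (hDataAll : ∀ g, g ∈ Subring.closure ((C : Set K) ∪ Set.range a) → v g ≤ 1 → Data v C e g)
    {x : K} (hx : x ∈ A) (hx1 : v x ≤ 1) : Data v C e x := by
  classical
  obtain ⟨P, hP0, hPc, hPx⟩ := (hAdef x).1 hx
  set d' := P.natDegree with hd'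
  set c : Fin (d'+1) → K := fun j => P.coeff (j : ℕ) with hc
  obtain ⟨Z, hZ0, hZ⟩ := clear_denoms _ c (fun j => hPc (j : ℕ))
  set g₀ : Fin (d'+1) → K := fun j => c j * Z with hg₀
  have hrel : ∑ j : Fin (d'+1), g₀ j * x ^ (j : ℕ) = 0 := by
    have h1 : P.eval x = ∑ j : Fin (d'+1), c j * x ^ (j : ℕ) := by
      rw [Polynomial.eval_eq_sum_range' (Nat.lt_succ_self d'), ← Fin.sum_univ_eq_sum_range]
    calc ∑ j : Fin (d'+1), g₀ j * x ^ (j : ℕ)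
        = (∑ j : Fin (d'+1), c j * x ^ (j : ℕ)) * Z := by
          rw [Finset.sum_mul]; exact Finset.sum_congr rfl fun j _ => by rw [hg₀]; ring
      _ = P.eval x * Z := by rw [h1]
      _ = 0 := by rw [hPx, zero_mul]
  have hRngA : Subring.closure ((C : Set K) ∪ Set.range a) ≤ A.toSubring := by
    apply Subring.closure_le.2
    rintro y (hy | ⟨i, rfl⟩)
    · exact hCA hy
    · exact ha i
  have hg₀d : g₀ (Fin.last d') ≠ 0 := by
    apply mul_ne_zero _ hZ0
    show P.coeff ((Fin.last d' : ℕ)) ≠ 0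
    exact fun h => hP0 (Polynomial.leadingCoeff_eq_zero.1 h)
  obtain ⟨j₁, _, hmaxv⟩ := Finset.exists_max_image Finset.univ (fun j => v (g₀ j))
    ⟨Fin.last d', Finset.mem_univ _⟩
  have hvj₁ : v (g₀ j₁) ≠ 0 := by
    intro h0
    have hle := hmaxv (Fin.last d') (Finset.mem_univ _)
    rw [h0] at hle
    exact hg₀d (v.zero_iff.1 (le_antisymm hle zero_le'))
  obtain ⟨c₀, hc₀C, hc₀0, hc₀v⟩ := hval _ (hRngA (hZ j₁)) (fun h => hvj₁ (show v (g₀ j₁) = 0 by rw [show g₀ j₁ = c j₁ * Z from rfl, h, v.map_zero]))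
  have hvc₀ : v c₀ ≠ 0 := fun h => hc₀0 (v.zero_iff.1 h)
  set G : Fin (d'+1) → K := fun j => g₀ j * c₀⁻¹ with hG
  have hGRng : ∀ j, G j ∈ Subring.closure ((C : Set K) ∪ Set.range a) := fun j =>
    Subring.mul_mem _ (hZ j) (Subring.subset_closure (Or.inl (C.inv_mem hc₀C)))
  have hG1 : ∀ j, v (G j) ≤ 1 := by
    intro j
    show v (g₀ j * c₀⁻¹) ≤ 1
    rw [v.map_mul, map_inv₀]
    calc v (g₀ j) * (v c₀)⁻¹ ≤ v c₀ * (v c₀)⁻¹ := by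
          apply mul_le_mul_left
          rw [hc₀v]
          exact hmaxv j (Finset.mem_univ _)
      _ = 1 := mul_inv_cancel₀ hvc₀
  have hGj₁ : v (G j₁) = 1 := by
    show v (g₀ j₁ * c₀⁻¹) = 1
    rw [v.map_mul, map_inv₀, hc₀v, mul_inv_cancel₀ hvj₁]
  have hGrel : ∑ j : Fin (d'+1), G j * x ^ (j : ℕ) = 0 := by
    calc ∑ j : Fin (d'+1), G j * x ^ (j : ℕ)
        = (∑ j : Fin (d'+1), g₀ j * x ^ (j : ℕ)) * c₀⁻¹ := by
          rw [Finset.sum_mul]; exact Finset.sum_congr rfl fun j _ => by rw [hG]; ring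
      _ = 0 := by rw [hrel, zero_mul]
  -- move to the residue field
  set eO : Fin m → ↥v.valuationSubring := fun i => ⟨e i, he i⟩ with heO
  set xO : ↥v.valuationSubring := ⟨x, hx1⟩ with hxO
  set GO : Fin (d'+1) → ↥v.valuationSubring := fun j => ⟨G j, hG1 j⟩ with hGO
  set ρ := IsLocalRing.residue ↥v.valuationSubring with hρ
  have halgG : ∀ j, IsAlgebraic ↥(resL v C eO) (ρ (GO j)) := by
    intro j
    have hdata : Data v C e (G j) := hDataAll (G j) (hGRng j) (hG1 j)
    exact data_to_alg v C eO (GO j) hdata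
  set F := IntermediateField.adjoin ↥(resL v C eO) (Set.range fun j => ρ (GO j)) with hF
  haveI : Algebra.IsAlgebraic ↥(resL v C eO) ↥F := by
    apply IntermediateField.isAlgebraic_adjoin
    rintro ξ ⟨j, rfl⟩
    exact (halgG j).isIntegral
  have hxF : IsAlgebraic ↥F (ρ xO) := by
    set cF : Fin (d'+1) → ↥F := fun j =>
      ⟨ρ (GO j), IntermediateField.subset_adjoin _ _ ⟨j, rfl⟩⟩ with hcF
    refine ⟨∑ j : Fin (d'+1), Polynomial.C (cF j) * Polynomial.X ^ (j : ℕ), ?_, ?_⟩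
    · intro h
      have hcoe := sum_C_mul_X_pow_coeff cF j₁
      rw [h, Polynomial.coeff_zero] at hcoe
      have hne : ρ (GO j₁) ≠ 0 := (residue_ne_zero_iff v _).2 hGj₁
      exact hne (congrArg Subtype.val hcoe.symm)
    · rw [sum_C_mul_X_pow_aeval]
      set SS : ↥v.valuationSubring := ∑ j : Fin (d'+1), GO j * xO ^ (j : ℕ) with hSS
      have hSS0 : SS = 0 := by
        apply Subtype.ext
        rw [hSS]
        push_cast
        exact hGrel
      calc ∑ j : Fin (d'+1), algebraMap ↥F _ (cF j) * (ρ xO) ^ (j : ℕ)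
          = ρ SS := by
            rw [hSS, map_sum]
            exact (Finset.sum_congr rfl fun j _ => by rw [map_mul, map_pow]; rfl).symm
        _ = 0 := by rw [hSS0, map_zero]
  haveI : Algebra.IsIntegral ↥(resL v C eO) ↥F := Algebra.IsAlgebraic.isIntegral
  have hint : IsIntegral ↥(resL v C eO) (ρ xO) := isIntegral_trans _ (hxF.isIntegral)
  exact alg_to_data v C eO xO hint.isAlgebraic

end Stmt12

namespace Stmt12

/-- Lemma 14.8 of Haskell–Hrushovski–Macpherson.  `K` is an
algebraically closed valued field; `C ≤ A` are valued subfields that are algebraically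
closed as fields; `A` is the algebraic closure inside `K` of `C(a 0, …, a (n-1))`
(hypothesis `hAdef`), and `Γ_C = Γ_A` (`hval`).  Then there are
`e 0, …, e (m-1)` in the subring `C[a 0, …, a (n-1)]` with `|e i| ≤ 1`, algebraically
independent over `C`, whose residues form a transcendence basis of `k(A)` over `k(C)`:
the residues are algebraically independent over `k(C)` (third conjunct, elementwise:
a polynomial with coefficients in `C ∩ R` whose value at `e` has residue `0` has all
coefficient residues `0`) and every residue of an element of `A ∩ R` is algebraic over
`k(C)(res (e 0), …)` (fourth conjunct: it satisfies a nonzero polynomial whose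
coefficients are residues of values at `e` of polynomials over `C ∩ R`). -/
theorem residue_transcendence_basis_in_ring {K : Type u} {Γ : Type w} [Field K]
    [IsAlgClosed K] [LinearOrderedCommGroupWithZero Γ] (v : Valuation K Γ)
    (C A : Subfield K) (hCA : C ≤ A) [IsAlgClosed ↥C] [IsAlgClosed ↥A]
    (n : ℕ) (a : Fin n → K) (ha : ∀ i, a i ∈ A)
    (hAdef : ∀ x : K, x ∈ A ↔ ∃ p : Polynomial K, p ≠ 0 ∧
      (∀ j, p.coeff j ∈ Subfield.closure ((C : Set K) ∪ Set.range a)) ∧ p.eval x = 0)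
    (hval : ∀ x ∈ A, x ≠ 0 → ∃ c ∈ C, c ≠ 0 ∧ v c = v x) :
    ∃ (m : ℕ) (e : Fin m → K),
      (∀ i, e i ∈ Subring.closure ((C : Set K) ∪ Set.range a) ∧ v (e i) ≤ 1) ∧
      (∀ p : MvPolynomial (Fin m) K, (∀ mon, p.coeff mon ∈ C) →
        MvPolynomial.eval e p = 0 → p = 0) ∧
      (∀ p : MvPolynomial (Fin m) K, (∀ mon, p.coeff mon ∈ C ∧ v (p.coeff mon) ≤ 1) →
        v (MvPolynomial.eval e p) < 1 → ∀ mon, v (p.coeff mon) < 1) ∧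
      (∀ x ∈ A, v x ≤ 1 →
        ∃ (d : ℕ) (q : Fin (d + 1) → MvPolynomial (Fin m) K),
          (∀ j mon, (q j).coeff mon ∈ C ∧ v ((q j).coeff mon) ≤ 1) ∧
          (∃ j, v (MvPolynomial.eval e (q j)) = 1) ∧
          v (∑ j : Fin (d + 1), MvPolynomial.eval e (q j) * x ^ (j : ℕ)) < 1) := by
  classical
  set MS : Set ℕ := {m | ∃ e : Fin m → K, Fam v C a e} with hMS
  have h0 : 0 ∈ MS := ⟨Fin.elim0, fun i => i.elim0, indep_empty v C _⟩
  have hbdd : ∀ m' ∈ MS, m' ≤ n := by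
    rintro m' ⟨e, hfam⟩
    exact bound_card C a e (fun i => (hfam.1 i).1) (stepB v hCA hval hfam)
  have hbddA : BddAbove MS := ⟨n, fun m' hm' => hbdd m' hm'⟩
  set m := sSup MS with hm
  have hmMS : m ∈ MS := Nat.sSup_mem ⟨0, h0⟩ hbddA
  obtain ⟨e, hfam⟩ := hmMS
  have hDataAll : ∀ g, g ∈ Subring.closure ((C : Set K) ∪ Set.range a) → v g ≤ 1 →
      Data v C e g := by
    intro g hg hg1
    apply stepD v C hfam hg hg1
    intro hfam'
    have h1 : m + 1 ∈ MS := ⟨Fin.cons g e, hfam'⟩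
    have h2 := le_csSup hbddA h1
    omega
  exact ⟨m, e, hfam.1, stepB v hCA hval hfam, hfam.2, fun x hx hx1 =>
    stepE v hCA ha hAdef hval (fun i => (hfam.1 i).2) hDataAll hx hx1⟩


end Stmt12
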